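/- arXiv:1102.4802 — 2 statements merged into one kernel-verified Lean document; each statement's English description precedes it below -/
import Mathlib

section
/- Let G be an edge-colored connected graph of order n and 1 <= k <= n-1. G has a spanning tree using at least k distinct colors if and only if for every subset R of the color set, the number of components of G - E_R(G) is at most n - k + |R|. -/
set_option linter.unusedSectionVars false
set_option linter.unusedVariables false


open SimpleGraph Finset

/-- Number of connected components of a graph. -/
noncomputable def omega {V : Type*} (G : SimpleGraph V) : ℕ :=
  Nat.card G.ConnectedComponent

/-- Number of edges of `G` having color `c`. -/
noncomputable def colorCount {V C : Type*} (G : SimpleGraph V)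
    (color : Sym2 V → C) (c : C) : ℕ :=
  Nat.card {e : Sym2 V // e ∈ G.edgeSet ∧ color e = c}

/-- `G` is `f`-chromatic: each color `c` appears on at most `f c` edges. -/
def IsChromatic {V C : Type*} (G : SimpleGraph V)
    (color : Sym2 V → C) (f : C → ℕ) : Prop :=
  ∀ c, colorCount G color c ≤ f c

/-- `G - E_R(G)` : delete all edges whose color lies in `R`. -/
def delR {V C : Type*} (G : SimpleGraph V) (color : Sym2 V → C)
    (R : Finset C) : SimpleGraph V :=
  G.deleteEdges {e | color e ∈ R}


section Aux

variable {V : Type*} [Fintype V]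

instance (G : SimpleGraph V) : Finite G.ConnectedComponent := Quot.finite _

noncomputable instance (G : SimpleGraph V) : Fintype G.edgeSet := Fintype.ofFinite _

/-- The induced map on connected components from a subgraph relation. -/
noncomputable def ccMap {G H : SimpleGraph V} (h : G ≤ H) :
    G.ConnectedComponent → H.ConnectedComponent :=
  ConnectedComponent.map (Hom.ofLE h)

lemma ccMap_mk {G H : SimpleGraph V} (h : G ≤ H) (v : V) :
    ccMap h (G.connectedComponentMk v) = H.connectedComponentMk v := rfl

lemma ccMap_surjective {G H : SimpleGraph V} (h : G ≤ H) :
    Function.Surjective (ccMap h) := by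
  intro c
  induction c using SimpleGraph.ConnectedComponent.ind with
  | _ v => exact ⟨G.connectedComponentMk v, rfl⟩

lemma omega_le_card (G : SimpleGraph V) : omega G ≤ Fintype.card V := by
  rw [omega, ← Nat.card_eq_fintype_card]
  exact Nat.card_le_card_of_surjective G.connectedComponentMk fun c => c.exists_rep

lemma omega_anti {G H : SimpleGraph V} (h : G ≤ H) : omega H ≤ omega G :=
  Nat.card_le_card_of_surjective _ (ccMap_surjective h)

lemma omega_eq_of_reachable_iff {G H : SimpleGraph V} (h : G ≤ H)
    (hr : ∀ u v, H.Reachable u v → G.Reachable u v) : omega G = omega H := by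
  refine Nat.card_eq_of_bijective (ccMap h) ⟨?_, ccMap_surjective h⟩
  intro c d
  induction c using SimpleGraph.ConnectedComponent.ind with
  | _ u =>
  induction d using SimpleGraph.ConnectedComponent.ind with
  | _ v =>
  intro hcd
  rw [ccMap_mk, ccMap_mk, ConnectedComponent.eq] at hcd
  exact ConnectedComponent.sound (hr _ _ hcd)

lemma omega_lt {G H : SimpleGraph V} (h : G ≤ H) {a b : V}
    (hH : H.Reachable a b) (hG : ¬ G.Reachable a b) : omega H < omega G := by
  have := Fintype.ofFinite G.ConnectedComponent
  have := Fintype.ofFinite H.ConnectedComponent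
  rw [omega, omega, Nat.card_eq_fintype_card, Nat.card_eq_fintype_card]
  refine Fintype.card_lt_of_surjective_not_injective _ (ccMap_surjective h) fun hinj => ?_
  have : G.connectedComponentMk a = G.connectedComponentMk b := by
    apply hinj
    rw [ccMap_mk, ccMap_mk]
    exact ConnectedComponent.sound hH
  exact hG (ConnectedComponent.eq.mp this)

/-- Key walk decomposition: reachability in `G` implies reachability in `G` minus an
edge, or reachability to one of the endpoints of that edge. -/
lemma reachable_delete_cases {G : SimpleGraph V} {a b : V} {u v : V}
    (h : G.Reachable u v) :
    (G.deleteEdges {s(a, b)}).Reachable u v ∨ (G.deleteEdges {s(a, b)}).Reachable u a ∨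
      (G.deleteEdges {s(a, b)}).Reachable u b := by
  obtain ⟨p⟩ := h
  induction p with
  | nil => exact Or.inl (Reachable.refl _)
  | @cons x y z hxy p ih =>
    by_cases he : s(x, y) = s(a, b)
    · rw [Sym2.eq_iff] at he
      rcases he with ⟨rfl, rfl⟩ | ⟨rfl, rfl⟩
      · exact Or.inr (Or.inl (Reachable.refl _))
      · exact Or.inr (Or.inr (Reachable.refl _))
    · have hadj : (G.deleteEdges {s(a, b)}).Adj x y := by
        simp only [deleteEdges_adj, Set.mem_singleton_iff]
        exact ⟨hxy, he⟩
      rcases ih with h1 | h1 | h1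
      · exact Or.inl (hadj.reachable.trans h1)
      · exact Or.inr (Or.inl (hadj.reachable.trans h1))
      · exact Or.inr (Or.inr (hadj.reachable.trans h1))

lemma omega_deleteEdge_le (G : SimpleGraph V) (a b : V) :
    omega (G.deleteEdges {s(a, b)}) ≤ omega G + 1 := by
  classical
  set G' := G.deleteEdges {s(a, b)} with hG'
  have hle : G' ≤ G := deleteEdges_le _
  -- injection into Option (CC G)
  have key : ∀ c d : G'.ConnectedComponent, ccMap hle c = ccMap hle d →
      c ≠ G'.connectedComponentMk b → d ≠ G'.connectedComponentMk b → c = d := by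
    intro c d
    induction c using SimpleGraph.ConnectedComponent.ind with
    | _ u =>
    induction d using SimpleGraph.ConnectedComponent.ind with
    | _ v =>
    intro hcd hc hd
    rw [ccMap_mk, ccMap_mk, ConnectedComponent.eq] at hcd
    have h1 := reachable_delete_cases (a := a) (b := b) hcd
    have h2 := reachable_delete_cases (a := a) (b := b) hcd.symm
    rw [← hG'] at h1 h2
    rcases h1 with h1 | h1 | h1
    · exact ConnectedComponent.sound h1
    · rcases h2 with h2 | h2 | h2
      · exact ConnectedComponent.sound h2.symm
      · exact ConnectedComponent.sound (h1.trans h2.symm)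
      · exact absurd (ConnectedComponent.sound h2) hd
    · exact absurd (ConnectedComponent.sound h1) hc
  have hinj : Function.Injective (fun c : G'.ConnectedComponent =>
      if c = G'.connectedComponentMk b then (none : Option G.ConnectedComponent)
      else some (ccMap hle c)) := by
    intro c d hcd
    simp only at hcd
    by_cases hc : c = G'.connectedComponentMk b
    · by_cases hd : d = G'.connectedComponentMk b
      · rw [hc, hd]
      · rw [if_pos hc, if_neg hd] at hcd; exact absurd hcd (by simp)
    · by_cases hd : d = G'.connectedComponentMk b
      · rw [if_neg hc, if_pos hd] at hcd; exact absurd hcd (by simp)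
      · rw [if_neg hc, if_neg hd] at hcd
        exact key c d (Option.some_injective _ hcd) hc hd
  have hcard := Nat.card_le_card_of_injective _ hinj
  have i1 := Fintype.ofFinite G.ConnectedComponent
  have i2 := Fintype.ofFinite G'.ConnectedComponent
  rw [Nat.card_eq_fintype_card, Nat.card_eq_fintype_card, Fintype.card_option] at hcard
  rw [omega, omega, Nat.card_eq_fintype_card, Nat.card_eq_fintype_card]
  exact hcard

lemma omega_deleteEdge_eq {G : SimpleGraph V} {a b : V}
    (h : (G.deleteEdges {s(a, b)}).Reachable a b) :
    omega (G.deleteEdges {s(a, b)}) = omega G := by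
  refine omega_eq_of_reachable_iff (deleteEdges_le _) fun u v huv => ?_
  have h1 := reachable_delete_cases (a := a) (b := b) huv
  have h2 := reachable_delete_cases (a := a) (b := b) huv.symm
  rcases h1 with h1 | h1 | h1
  · exact h1
  all_goals rcases h2 with h2 | h2 | h2
  · exact h2.symm
  · exact h1.trans h2.symm
  · exact (h1.trans h).trans h2.symm
  · exact h2.symm
  · exact (h1.trans h.symm).trans h2.symm
  · exact h1.trans h2.symm

lemma deleteEdges_not_mem {G : SimpleGraph V} {e : Sym2 V} (h : e ∉ G.edgeSet) :
    G.deleteEdges {e} = G := by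
  rw [deleteEdges_eq_self]
  simpa using h

end Aux
section Aux2

variable {V : Type*} [Fintype V]

lemma IsAcyclic.anti {G H : SimpleGraph V} (hGH : G ≤ H) (h : H.IsAcyclic) : G.IsAcyclic :=
  fun _v c hc =>
    h (c.transfer H fun e he => edgeSet_mono hGH (c.edges_subset_edgeSet he)) (hc.transfer _)

lemma omega_bot : omega (⊥ : SimpleGraph V) = Fintype.card V := by
  rw [omega, ← Nat.card_eq_fintype_card]
  refine (Nat.card_eq_of_bijective (⊥ : SimpleGraph V).connectedComponentMk ⟨?_, fun c => c.exists_rep⟩).symm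
  intro u v huv
  exact reachable_bot.mp (ConnectedComponent.eq.mp huv)

lemma edgeFinset_deleteEdge [DecidableEq V] (H : SimpleGraph V) (e : Sym2 V)
    [Fintype H.edgeSet] [Fintype (H.deleteEdges {e}).edgeSet] :
    (H.deleteEdges {e}).edgeFinset = H.edgeFinset.erase e := by
  ext f
  simp [mem_edgeFinset, edgeSet_deleteEdges, Finset.mem_erase, and_comm]

lemma omega_supermodular [DecidableEq V] (A : SimpleGraph V) : ∀ (N : ℕ) (B : SimpleGraph V),
    (B.edgeFinset \ A.edgeFinset).card = N →
    omega A + omega B ≤ omega (A ⊔ B) + omega (A ⊓ B) := by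
  classical
  intro N
  induction N using Nat.strong_induction_on with
  | _ N ih =>
  intro B hcard
  by_cases hBA : B ≤ A
  · rw [sup_of_le_left hBA, inf_of_le_right hBA, Nat.add_comm]
  · have hne : (B.edgeFinset \ A.edgeFinset).Nonempty := by
      rw [Finset.sdiff_nonempty]
      intro hsub
      exact hBA (edgeSet_subset_edgeSet.mp (by
        rw [← coe_edgeFinset, ← coe_edgeFinset]
        exact_mod_cast hsub))
    obtain ⟨e, he⟩ := hne
    revert he
    induction e using Sym2.ind with
    | _ a b =>
    intro he
    obtain ⟨heB, heA⟩ := Finset.mem_sdiff.mp he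
    have hadjB : B.Adj a b := (mem_edgeFinset.mp heB)
    have heA' : s(a, b) ∉ A.edgeSet := fun hh => heA (mem_edgeFinset.mpr hh)
    set B' := B.deleteEdges {s(a, b)} with hB'
    have hBB' : B' ≤ B := deleteEdges_le _
    have id1 : A ⊔ B' = (A ⊔ B).deleteEdges {s(a, b)} := by
      ext u v
      simp only [sup_adj, deleteEdges_adj, Set.mem_singleton_iff, hB']
      have himp : A.Adj u v → ¬s(u, v) = s(a, b) := fun h1 h2 =>
        heA' (h2 ▸ h1)
      tauto
    have id2 : A ⊓ B' = A ⊓ B := by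
      ext u v
      simp only [inf_adj, deleteEdges_adj, Set.mem_singleton_iff, hB']
      have himp : A.Adj u v → ¬s(u, v) = s(a, b) := fun h1 h2 =>
        heA' (h2 ▸ h1)
      tauto
    have hmeas : (B'.edgeFinset \ A.edgeFinset).card < N := by
      have hBe : B'.edgeFinset = B.edgeFinset.erase s(a, b) := edgeFinset_deleteEdge B _
      have : B'.edgeFinset \ A.edgeFinset = (B.edgeFinset \ A.edgeFinset).erase s(a, b) := by
        rw [hBe]
        ext f
        simp only [Finset.mem_sdiff, Finset.mem_erase]
        tauto
      rw [this, ← hcard]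
      exact Finset.card_erase_lt_of_mem he
    have IH := ih _ hmeas B' rfl
    rw [id2] at IH
    have h1 : omega B ≤ omega B' := omega_anti hBB'
    have h2 : omega B' ≤ omega B + 1 := omega_deleteEdge_le B a b
    have h3 : omega (A ⊔ B) ≤ omega (A ⊔ B') := omega_anti (sup_le_sup_left hBB' A)
    by_cases hr : B'.Reachable a b
    · have e1 : omega B' = omega B := omega_deleteEdge_eq hr
      have e2 : omega (A ⊔ B') = omega (A ⊔ B) := by
        rw [id1]
        exact omega_deleteEdge_eq (hr.mono ((le_sup_right : B' ≤ A ⊔ B').trans (le_of_eq id1)))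
      omega
    · have e1 : omega B < omega B' := omega_lt hBB' hadjB.reachable hr
      have h4 : omega (A ⊔ B') ≤ omega (A ⊔ B) + 1 := by
        rw [id1]; exact omega_deleteEdge_le _ a b
      omega

lemma omega_acyclic : ∀ (N : ℕ) (H : SimpleGraph V), H.edgeFinset.card = N →
    H.IsAcyclic → omega H + N = Fintype.card V := by
  classical
  intro N
  induction N using Nat.strong_induction_on with
  | _ N ih =>
  intro H hcard hac
  rcases Finset.eq_empty_or_nonempty H.edgeFinset with hemp | ⟨e, he⟩
  · have : H = ⊥ := by
      rw [← edgeSet_eq_empty, ← coe_edgeFinset, hemp]; simp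
    rw [hemp] at hcard
    subst this
    simp only [← hcard, Finset.card_empty, Nat.add_zero]
    exact omega_bot
  · revert he
    induction e using Sym2.ind with
    | _ a b =>
    intro he
    have hadj : H.Adj a b := (mem_edgeFinset.mp he)
    have hbr : H.IsBridge s(a, b) := isAcyclic_iff_forall_edge_isBridge.mp hac (mem_edgeFinset.mp he)
    have hnr : ¬(H.deleteEdges {s(a, b)}).Reachable a b := (isBridge_iff.mp hbr)
    set H' := H.deleteEdges {s(a, b)} with hH'
    have hlt : omega H < omega H' := omega_lt (deleteEdges_le _) hadj.reachable hnr
    have hle : omega H' ≤ omega H + 1 := omega_deleteEdge_le H a b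
    have hcard' : H'.edgeFinset.card = N - 1 := by
      rw [hH', edgeFinset_deleteEdge, Finset.card_erase_of_mem he, hcard]
    have hN : 1 ≤ N := by
      rw [← hcard]
      exact Finset.card_pos.mpr ⟨_, he⟩
    have IH := ih (N - 1) (by omega) H' hcard' (IsAcyclic.anti (deleteEdges_le _) hac)
    omega

end Aux2
section Aux3

variable {V : Type*} [Fintype V]

instance : Finite (SimpleGraph V) :=
  Finite.of_injective SimpleGraph.edgeSet edgeSet_injective

lemma isAcyclic_sup_edge {H : SimpleGraph V} (hH : H.IsAcyclic) {a b : V} (hab : a ≠ b)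
    (hr : ¬H.Reachable a b) : (H ⊔ fromEdgeSet {s(a, b)}).IsAcyclic := by
  intro v c hc
  by_cases hm : s(a, b) ∈ c.edges
  · have hcyc : (H ⊔ fromEdgeSet {s(a, b)}).Adj a b ∧
        ((H ⊔ fromEdgeSet {s(a, b)}) \ fromEdgeSet {s(a, b)}).Reachable a b :=
      adj_and_reachable_delete_edges_iff_exists_cycle.mpr ⟨v, c, hc, hm⟩
    have hle : (H ⊔ fromEdgeSet {s(a, b)}) \ fromEdgeSet {s(a, b)} ≤ H := by
      intro x y hxy
      obtain ⟨hxy1, hxy2⟩ := hxy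
      rcases hxy1 with h | h
      · exact h
      · exact absurd h hxy2
    exact hr (hcyc.2.mono hle)
  · have hsub : ∀ e ∈ c.edges, e ∈ H.edgeSet := by
      intro e hec
      have := c.edges_subset_edgeSet hec
      rw [edgeSet_sup, edgeSet_fromEdgeSet] at this
      rcases this with h | h
      · exact h
      · obtain ⟨h1, -⟩ := h
        rw [Set.mem_singleton_iff] at h1
        exact absurd (h1 ▸ hec) hm
    exact hH (c.transfer H hsub) (hc.transfer hsub)

lemma exists_maximal_forest (G F0 : SimpleGraph V) (hle : F0 ≤ G) (hF0 : F0.IsAcyclic) :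
    ∃ H, F0 ≤ H ∧ H ≤ G ∧ H.IsAcyclic ∧ ∀ u v, G.Reachable u v → H.Reachable u v := by
  set S : Set (SimpleGraph V) := {H | F0 ≤ H ∧ H ≤ G ∧ H.IsAcyclic} with hS
  obtain ⟨H, hHS, hmax⟩ := (Set.toFinite S).exists_maximal ⟨F0, le_refl _, hle, hF0⟩
  refine ⟨H, hHS.1, hHS.2.1, hHS.2.2, ?_⟩
  have hadj : ∀ u v, G.Adj u v → H.Reachable u v := by
    intro u v huv
    by_contra hnr
    have hKS : H ⊔ fromEdgeSet {s(u, v)} ∈ S := by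
      refine ⟨hHS.1.trans le_sup_left, sup_le hHS.2.1 ?_, isAcyclic_sup_edge hHS.2.2 huv.ne hnr⟩
      intro x y hxy
      rw [fromEdgeSet_adj, Set.mem_singleton_iff] at hxy
      obtain ⟨h1, -⟩ := hxy
      rw [Sym2.eq_iff] at h1
      rcases h1 with ⟨rfl, rfl⟩ | ⟨rfl, rfl⟩
      · exact huv
      · exact huv.symm
    have : id H = id (H ⊔ fromEdgeSet {s(u, v)}) := le_antisymm le_sup_left (hmax hKS le_sup_left)
    simp only [id] at this
    have hKadj : (H ⊔ fromEdgeSet {s(u, v)}).Adj u v := by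
      right
      rw [fromEdgeSet_adj]
      exact ⟨rfl, huv.ne⟩
    rw [← this] at hKadj
    exact hnr hKadj.reachable
  intro u v huv
  obtain ⟨p⟩ := huv
  induction p with
  | nil => exact Reachable.refl _
  | cons h p ih => exact (hadj _ _ h).trans ih

lemma omega_connected {G : SimpleGraph V} (h : G.Connected) : omega G = 1 := by
  rw [omega, Nat.card_eq_one_iff_unique]
  constructor
  · constructor
    intro c d
    induction c using SimpleGraph.ConnectedComponent.ind with
    | _ u =>
    induction d using SimpleGraph.ConnectedComponent.ind with
    | _ v =>
    exact ConnectedComponent.sound (h.preconnected u v)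
  · have := h.nonempty
    exact ⟨G.connectedComponentMk this.some⟩

end Aux3
section Main

variable {V C : Type*} [Fintype V]

lemma omega_deleteEdge_le' (G : SimpleGraph V) (e : Sym2 V) :
    omega (G.deleteEdges {e}) ≤ omega G + 1 :=
  Sym2.ind (fun a b => omega_deleteEdge_le G a b) e

lemma cut_persist {G K : SimpleGraph V} (e : Sym2 V) (hKG : K ≤ G) (heK : e ∈ K.edgeSet)
    (h : omega G < omega (G.deleteEdges {e})) :
    omega K < omega (K.deleteEdges {e}) := by
  revert heK h
  induction e using Sym2.ind with
  | _ a b =>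
  intro heK h
  have hnr : ¬(G.deleteEdges {s(a, b)}).Reachable a b := by
    intro hr
    rw [omega_deleteEdge_eq hr] at h
    omega
  have hnrK : ¬(K.deleteEdges {s(a, b)}).Reachable a b := fun hr =>
    hnr (hr.mono (deleteEdges_mono hKG))
  exact omega_lt (deleteEdges_le _) (K.mem_edgeSet.mp heK).reachable hnrK

lemma delR_le (G : SimpleGraph V) (color : Sym2 V → C) (R : Finset C) :
    delR G color R ≤ G := deleteEdges_le _

lemma delR_edgeSet (G : SimpleGraph V) (color : Sym2 V → C) (R : Finset C) :
    (delR G color R).edgeSet = G.edgeSet \ {e | color e ∈ R} := edgeSet_deleteEdges _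

lemma delR_anti (G : SimpleGraph V) (color : Sym2 V → C) {R1 R2 : Finset C} (h : R1 ⊆ R2) :
    delR G color R2 ≤ delR G color R1 :=
  deleteEdges_anti fun e he => h he

lemma delR_empty (G : SimpleGraph V) (color : Sym2 V → C) : delR G color ∅ = G := by
  have : {e : Sym2 V | color e ∈ (∅ : Finset C)} = ∅ := by simp
  rw [delR, this, deleteEdges_empty]

lemma delR_sup [DecidableEq C] (G : SimpleGraph V) (color : Sym2 V → C) (R1 R2 : Finset C) :
    delR G color R1 ⊔ delR G color R2 = delR G color (R1 ∩ R2) := by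
  ext u v
  simp only [sup_adj, delR, deleteEdges_adj, Set.mem_setOf_eq, Finset.mem_inter]
  tauto

lemma delR_inf [DecidableEq C] (G : SimpleGraph V) (color : Sym2 V → C) (R1 R2 : Finset C) :
    delR G color R1 ⊓ delR G color R2 = delR G color (R1 ∪ R2) := by
  ext u v
  simp only [inf_adj, delR, deleteEdges_adj, Set.mem_setOf_eq, Finset.mem_union]
  tauto

lemma delR_delete_eq (G : SimpleGraph V) (color : Sym2 V → C) (R : Finset C) (e : Sym2 V) :
    delR (G.deleteEdges {e}) color R = (delR G color R).deleteEdges {e} := by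
  rw [delR, delR, deleteEdges_deleteEdges, deleteEdges_deleteEdges, Set.union_comm]

lemma viol_tight {G : SimpleGraph V} {color : Sym2 V → C} {k : ℕ} {R : Finset C} {e : Sym2 V}
    (heG : e ∈ G.edgeSet)
    (hcond : k + omega (delR G color R) ≤ Fintype.card V + R.card)
    (hviol : Fintype.card V + R.card < k + omega ((delR G color R).deleteEdges {e})) :
    color e ∉ R ∧ omega (delR G color R) < omega ((delR G color R).deleteEdges {e}) ∧
      k + omega (delR G color R) = Fintype.card V + R.card := by
  set A := delR G color R with hA
  have h1 : omega A ≤ omega (A.deleteEdges {e}) := omega_anti (deleteEdges_le _)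
  have h2 : omega (A.deleteEdges {e}) ≤ omega A + 1 := omega_deleteEdge_le' A e
  have h3 := omega_le_card A
  have h4 := omega_le_card (A.deleteEdges {e})
  have hlt : omega A < omega (A.deleteEdges {e}) := by omega
  have hmem : color e ∉ R := by
    by_contra hc
    have heA : e ∉ A.edgeSet := by
      rw [hA, delR_edgeSet]
      rintro ⟨-, h⟩
      exact h hc
    rw [deleteEdges_not_mem heA] at hlt
    omega
  exact ⟨hmem, hlt, by omega⟩

/-- The injective-colors case of the Rado-type argument. -/
lemma rado_inj (G : SimpleGraph V) (color : Sym2 V → C) (k : ℕ)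
    (hinj : ∀ e1 ∈ G.edgeSet, ∀ e2 ∈ G.edgeSet, color e1 = color e2 → e1 = e2)
    (hcond : ∀ R : Finset C, k + omega (delR G color R) ≤ Fintype.card V + R.card) :
    ∃ s : Finset (Sym2 V), ↑s ⊆ G.edgeSet ∧ (fromEdgeSet (↑s : Set (Sym2 V))).IsAcyclic ∧
      s.card = k ∧ Set.InjOn color ↑s := by
  classical
  have h0 := hcond ∅
  rw [delR_empty] at h0
  simp only [Finset.card_empty, Nat.add_zero] at h0
  have hωG2 := omega_le_card G
  obtain ⟨H, -, hHG, hHac, hHreach⟩ := exists_maximal_forest G ⊥ bot_le isAcyclic_bot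
  have hω : omega H = omega G := omega_eq_of_reachable_iff hHG hHreach
  have hforest := omega_acyclic H.edgeFinset.card H rfl hHac
  have hωG := omega_le_card G
  obtain ⟨s, hs, hscard⟩ := Finset.exists_subset_card_eq
    (show k ≤ H.edgeFinset.card by omega)
  have hsH : (↑s : Set (Sym2 V)) ⊆ H.edgeSet := by
    intro e he
    exact mem_edgeFinset.mp (hs he)
  refine ⟨s, hsH.trans (edgeSet_mono hHG), ?_, hscard, ?_⟩
  · refine IsAcyclic.anti ?_ hHac
    intro u v huv
    rw [fromEdgeSet_adj] at huv
    exact H.mem_edgeSet.mp (hsH huv.1)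
  · intro e1 h1 e2 h2 hc
    exact hinj e1 (edgeSet_mono hHG (hsH h1)) e2 (edgeSet_mono hHG (hsH h2)) hc

/-- The Rado-type theorem: a rainbow forest with `k` edges exists under the rank condition. -/
lemma rado (color : Sym2 V → C) (k : ℕ) : ∀ (N : ℕ) (G : SimpleGraph V),
    G.edgeFinset.card ≤ N →
    (∀ R : Finset C, k + omega (delR G color R) ≤ Fintype.card V + R.card) →
    ∃ s : Finset (Sym2 V), ↑s ⊆ G.edgeSet ∧ (fromEdgeSet (↑s : Set (Sym2 V))).IsAcyclic ∧
      s.card = k ∧ Set.InjOn color ↑s := by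
  classical
  intro N
  induction N with
  | zero =>
    intro G hN hcond
    refine rado_inj G color k ?_ hcond
    intro e1 he1
    exact absurd (Finset.card_pos.mpr ⟨e1, mem_edgeFinset.mpr he1⟩) (by omega)
  | succ N ih =>
    intro G hN hcond
    by_cases hdup : ∃ e1 ∈ G.edgeSet, ∃ e2 ∈ G.edgeSet, e1 ≠ e2 ∧ color e1 = color e2
    · obtain ⟨e1, he1, e2, he2, hne, hcc⟩ := hdup
      have hcard1 : ∀ e ∈ G.edgeSet, (G.deleteEdges {e}).edgeFinset.card ≤ N := by
        intro e he
        rw [edgeFinset_deleteEdge, Finset.card_erase_of_mem (mem_edgeFinset.mpr he)]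
        have : 1 ≤ G.edgeFinset.card := Finset.card_pos.mpr ⟨e, mem_edgeFinset.mpr he⟩
        omega
      by_cases h1 : ∀ R : Finset C,
          k + omega (delR (G.deleteEdges {e1}) color R) ≤ Fintype.card V + R.card
      · obtain ⟨s, hs1, hs2, hs3, hs4⟩ := ih (G.deleteEdges {e1}) (hcard1 e1 he1) h1
        exact ⟨s, hs1.trans (edgeSet_mono (deleteEdges_le _)), hs2, hs3, hs4⟩
      by_cases h2 : ∀ R : Finset C,
          k + omega (delR (G.deleteEdges {e2}) color R) ≤ Fintype.card V + R.card
      · obtain ⟨s, hs1, hs2, hs3, hs4⟩ := ih (G.deleteEdges {e2}) (hcard1 e2 he2) h2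
        exact ⟨s, hs1.trans (edgeSet_mono (deleteEdges_le _)), hs2, hs3, hs4⟩
      exfalso
      push_neg at h1 h2
      obtain ⟨R1, hv1⟩ := h1
      obtain ⟨R2, hv2⟩ := h2
      rw [delR_delete_eq] at hv1 hv2
      obtain ⟨hc1, hlt1, htight1⟩ := viol_tight he1 (hcond R1) hv1
      obtain ⟨hc2, hlt2, htight2⟩ := viol_tight he2 (hcond R2) hv2
      rw [← hcc] at hc2
      -- K := delR G color (R1 ∪ R2)
      set K := delR G color (R1 ∪ R2) with hK
      have hKle1 : K ≤ delR G color R1 := delR_anti G color Finset.subset_union_left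
      have hKle2 : K ≤ delR G color R2 := delR_anti G color Finset.subset_union_right
      have he1K : e1 ∈ K.edgeSet := by
        rw [hK, delR_edgeSet]
        refine ⟨he1, ?_⟩
        simp only [Set.mem_setOf_eq, Finset.mem_union]
        rintro (h | h)
        · exact hc1 h
        · exact hc2 h
      have he2K1 : e2 ∈ (K.deleteEdges {e1}).edgeSet := by
        rw [edgeSet_deleteEdges]
        refine ⟨?_, by simpa using hne.symm⟩
        rw [hK, delR_edgeSet]
        refine ⟨he2, ?_⟩
        simp only [Set.mem_setOf_eq, Finset.mem_union, ← hcc]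
        rintro (h | h)
        · exact hc1 h
        · exact hc2 h
      -- two strict drops
      have hd1 : omega K < omega (K.deleteEdges {e1}) := cut_persist e1 hKle1 he1K hlt1
      have hd2 : omega (K.deleteEdges {e1}) < omega ((K.deleteEdges {e1}).deleteEdges {e2}) := by
        refine cut_persist e2 ?_ he2K1 hlt2
        exact (deleteEdges_le _).trans hKle2
      -- the insert-c condition
      have hcIns : color e1 ∉ R1 ∪ R2 := by
        simp only [Finset.mem_union]
        rintro (h | h)
        · exact hc1 h
        · exact hc2 h
      have hle' : delR G color (insert (color e1) (R1 ∪ R2)) ≤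
          (K.deleteEdges {e1}).deleteEdges {e2} := by
        rw [← edgeSet_subset_edgeSet, edgeSet_deleteEdges, edgeSet_deleteEdges, hK,
          delR_edgeSet, delR_edgeSet]
        intro e he
        rw [Set.mem_diff] at he
        obtain ⟨heG, hcol⟩ := he
        simp only [Set.mem_setOf_eq, Finset.mem_insert, Finset.mem_union] at hcol
        push_neg at hcol
        rw [Set.mem_diff, Set.mem_diff]
        refine ⟨⟨⟨heG, ?_⟩, ?_⟩, ?_⟩
        · simp only [Set.mem_setOf_eq, Finset.mem_union]
          rintro (h | h)
          · exact hcol.2.1 h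
          · exact hcol.2.2 h
        · intro h
          rw [Set.mem_singleton_iff] at h
          exact hcol.1 (h ▸ rfl)
        · intro h
          rw [Set.mem_singleton_iff] at h
          exact hcol.1 (h ▸ hcc.symm ▸ rfl)
      have hfin := hcond (insert (color e1) (R1 ∪ R2))
      have hfin2 : omega ((K.deleteEdges {e1}).deleteEdges {e2}) ≤
          omega (delR G color (insert (color e1) (R1 ∪ R2))) := omega_anti hle'
      rw [Finset.card_insert_of_notMem hcIns] at hfin
      -- supermodularity and tightness
      have hsm := omega_supermodular (delR G color R1) _ (delR G color R2) rfl
      rw [delR_sup, delR_inf] at hsm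
      have hci := hcond (R1 ∩ R2)
      have hcu := hcond (R1 ∪ R2)
      have hcards := Finset.card_union_add_card_inter R1 R2
      rw [← hK] at hsm hcu
      omega
    · push_neg at hdup
      refine rado_inj G color k ?_ hcond
      intro f1 hf1 f2 hf2 hc
      by_contra hne
      exact (hdup f1 hf1 f2 hf2 hne) hc

end Main
theorem stmt10 {V C : Type*} [Fintype V] (G : SimpleGraph V) (color : Sym2 V → C)
    (n k : ℕ) (hn : Fintype.card V = n) (hG : G.Connected)
    (hk1 : 1 ≤ k) (hk2 : k ≤ n - 1) :
    (∃ F : SimpleGraph V, F ≤ G ∧ F.IsTree ∧ k ≤ Nat.card (color '' F.edgeSet)) ↔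
      ∀ R : Finset C, omega (delR G color R) ≤ n - k + R.card := by
  classical
  subst hn
  constructor
  · rintro ⟨T, hTG, hT, hTk⟩ R
    have hTn := omega_acyclic T.edgeFinset.card T rfl hT.IsAcyclic
    rw [omega_connected hT.isConnected] at hTn
    set t := (T.edgeFinset.filter (fun e => color e ∉ R)).card with ht
    have hTR_ac : (delR T color R).IsAcyclic := IsAcyclic.anti (delR_le _ _ _) hT.IsAcyclic
    have hTRedges : (delR T color R).edgeFinset = T.edgeFinset.filter (fun e => color e ∉ R) := by
      ext e
      simp only [mem_edgeFinset, delR_edgeSet, Set.mem_diff, Set.mem_setOf_eq, Finset.mem_filter]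
    have hTRn := omega_acyclic (delR T color R).edgeFinset.card _ rfl hTR_ac
    rw [hTRedges] at hTRn
    have hmono : omega (delR G color R) ≤ omega (delR T color R) :=
      omega_anti (deleteEdges_mono hTG)
    have hcount : k ≤ (T.edgeFinset.image color).card := by
      have him : color '' T.edgeSet = ↑(T.edgeFinset.image color) := by
        rw [← coe_edgeFinset, Finset.coe_image]
      rwa [him, Nat.card_coe_set_eq, Set.ncard_coe_finset] at hTk
    have himg : (T.edgeFinset.image color).card ≤ t + R.card := by
      have hsub : T.edgeFinset.image color ⊆
          (T.edgeFinset.filter (fun e => color e ∉ R)).image color ∪ R := by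
        intro c hc
        rw [Finset.mem_image] at hc
        obtain ⟨e, he, rfl⟩ := hc
        by_cases h : color e ∈ R
        · exact Finset.mem_union_right _ h
        · exact Finset.mem_union_left _
            (Finset.mem_image_of_mem _ (Finset.mem_filter.mpr ⟨he, h⟩))
      calc (T.edgeFinset.image color).card
          ≤ ((T.edgeFinset.filter (fun e => color e ∉ R)).image color ∪ R).card :=
            Finset.card_le_card hsub
        _ ≤ ((T.edgeFinset.filter (fun e => color e ∉ R)).image color).card + R.card :=
            Finset.card_union_le _ _
        _ ≤ t + R.card := by
            exact Nat.add_le_add_right (Finset.card_image_le) _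
    have hb := omega_le_card (delR G color R)
    omega
  · intro hcond
    have hcond' : ∀ R : Finset C, k + omega (delR G color R) ≤ Fintype.card V + R.card := by
      intro R
      have := hcond R
      have hb := omega_le_card (delR G color R)
      omega
    obtain ⟨s, hsG, hsac, hscard, hsinj⟩ := rado color k G.edgeFinset.card G le_rfl hcond'
    have hF0 : fromEdgeSet (↑s : Set (Sym2 V)) ≤ G := by
      rw [← edgeSet_subset_edgeSet, edgeSet_fromEdgeSet]
      exact fun e he => hsG he.1
    obtain ⟨H, hFH, hHG, hHac, hHreach⟩ := exists_maximal_forest G (fromEdgeSet ↑s) hF0 hsac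
    have hne := hG.nonempty
    refine ⟨H, hHG, ⟨Connected.mk fun u v => hHreach u v (hG.preconnected u v), hHac⟩, ?_⟩
    have hsub : (↑s : Set (Sym2 V)) ⊆ H.edgeSet := by
      intro e he
      have hed : e ∈ (fromEdgeSet (↑s : Set (Sym2 V))).edgeSet := by
        rw [edgeSet_fromEdgeSet]
        exact ⟨he, fun hd => (G.not_isDiag_of_mem_edgeSet (hsG he)) hd⟩
      exact edgeSet_mono hFH hed
    have h1 : (color '' (↑s : Set (Sym2 V))).ncard = k := by
      rw [Set.ncard_image_of_injOn hsinj, Set.ncard_coe_finset, hscard]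
    have h2 : (color '' (↑s : Set (Sym2 V))).ncard ≤ (color '' H.edgeSet).ncard :=
      Set.ncard_le_ncard (Set.image_mono hsub) ((H.edgeSet.toFinite).image _)
    rw [Nat.card_coe_set_eq]
    omega
end

section
/- An edge-colored connected graph G of order n has a heterochromatic spanning tree if and only if for every partition of V(G) into t parts (1 <= t <= n), there exist at least t-1 edges with pairwise distinct colors each joining vertices in different parts of the partition. -/
open SimpleGraph Finset

namespace HetAux

variable {V : Type*} [Fintype V] [DecidableEq V]

lemma cc_rep {G : SimpleGraph V} (c : G.ConnectedComponent) :
    ∃ v, c = G.connectedComponentMk v := by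
  obtain ⟨v, h⟩ := Quot.exists_rep c
  exact ⟨v, h.symm⟩

lemma omega_le_omega_of_reach {K L : SimpleGraph V}
    (h : ∀ a b, K.Reachable a b → L.Reachable a b) : omega L ≤ omega K := by
  refine Nat.card_le_card_of_surjective
    (SimpleGraph.ConnectedComponent.lift L.connectedComponentMk
      (fun v w p _ => SimpleGraph.ConnectedComponent.sound (h v w p.reachable))) ?_
  intro c
  obtain ⟨v, rfl⟩ := cc_rep c
  exact ⟨K.connectedComponentMk v, rfl⟩

lemma omega_le_of_le {G H : SimpleGraph V} (h : G ≤ H) : omega H ≤ omega G :=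
  omega_le_omega_of_reach (fun _ _ hr => hr.mono h)

lemma reach_del_cases {L : SimpleGraph V} {x y : V} :
    ∀ {a b : V}, L.Reachable a b →
    (L.deleteEdges {s(x,y)}).Reachable a b ∨
    ((L.deleteEdges {s(x,y)}).Reachable a x ∧ (L.deleteEdges {s(x,y)}).Reachable y b) ∨
    ((L.deleteEdges {s(x,y)}).Reachable a y ∧ (L.deleteEdges {s(x,y)}).Reachable x b) := by
  intro a b hab
  obtain ⟨w⟩ := hab
  induction w with
  | nil => exact Or.inl (Reachable.refl _)
  | @cons u v b huv p ih =>
    by_cases he : s(u,v) = s(x,y)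
    · rw [Sym2.eq_iff] at he
      rcases he with ⟨rfl, rfl⟩ | ⟨rfl, rfl⟩
      · rcases ih with h1 | ⟨h2a, h2b⟩ | ⟨h3a, h3b⟩
        · exact Or.inr (Or.inl ⟨Reachable.refl _, h1⟩)
        · exact Or.inl (h2a.symm.trans h2b)
        · exact Or.inl h3b
      · rcases ih with h1 | ⟨h2a, h2b⟩ | ⟨h3a, h3b⟩
        · exact Or.inr (Or.inr ⟨Reachable.refl _, h1⟩)
        · exact Or.inl h2b
        · exact Or.inl (h3a.symm.trans h3b)
    · have hK : (L.deleteEdges {s(x,y)}).Adj u v :=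
        SimpleGraph.deleteEdges_adj.mpr ⟨huv, by simpa using he⟩
      rcases ih with h1 | ⟨h2a, h2b⟩ | ⟨h3a, h3b⟩
      · exact Or.inl (hK.reachable.trans h1)
      · exact Or.inr (Or.inl ⟨hK.reachable.trans h2a, h2b⟩)
      · exact Or.inr (Or.inr ⟨hK.reachable.trans h3a, h3b⟩)

lemma omega_deleteEdge_of_reach {L : SimpleGraph V} {x y : V}
    (hr : (L.deleteEdges {s(x,y)}).Reachable x y) :
    omega (L.deleteEdges {s(x,y)}) = omega L := by
  refine le_antisymm (omega_le_omega_of_reach ?_) (omega_le_of_le (deleteEdges_le _))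
  intro a b hab
  rcases reach_del_cases (x := x) (y := y) hab with h1 | ⟨h2a, h2b⟩ | ⟨h3a, h3b⟩
  · exact h1
  · exact (h2a.trans hr).trans h2b
  · exact (h3a.trans hr.symm).trans h3b

lemma omega_deleteEdge_of_not_reach {L : SimpleGraph V} {x y : V}
    (hadj : L.Adj x y) (hnr : ¬ (L.deleteEdges {s(x,y)}).Reachable x y) :
    omega (L.deleteEdges {s(x,y)}) = omega L + 1 := by
  classical
  set K := L.deleteEdges {s(x,y)} with hKdef
  set cx := K.connectedComponentMk x with hcx
  have hbij : Function.Bijective (fun w : {w : K.ConnectedComponent // w ≠ cx} =>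
      SimpleGraph.ConnectedComponent.map
        (SimpleGraph.Hom.ofLE (SimpleGraph.deleteEdges_le _)) w.1) := by
    constructor
    · rintro ⟨w, hw⟩ ⟨w', hw'⟩ hww
      obtain ⟨v, rfl⟩ := cc_rep w
      obtain ⟨v', rfl⟩ := cc_rep w'
      simp only [SimpleGraph.ConnectedComponent.map_mk] at hww
      have hr : L.Reachable v v' := by
        have := SimpleGraph.ConnectedComponent.eq.mp hww
        simpa using this
      rcases reach_del_cases (x := x) (y := y) hr with h1 | ⟨h2a, h2b⟩ | ⟨h3a, h3b⟩
      · exact Subtype.ext (SimpleGraph.ConnectedComponent.sound h1)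
      · exact absurd (SimpleGraph.ConnectedComponent.sound h2a) hw
      · exact absurd (SimpleGraph.ConnectedComponent.sound h3b).symm hw'
    · intro c
      obtain ⟨v, rfl⟩ := cc_rep c
      by_cases hvx : K.Reachable v x
      · refine ⟨⟨K.connectedComponentMk y, ?_⟩, ?_⟩
        · intro hc
          exact hnr ((SimpleGraph.ConnectedComponent.exact hc).symm)
        · simp only [SimpleGraph.ConnectedComponent.map_mk]
          exact SimpleGraph.ConnectedComponent.sound
            ((hadj.symm.reachable).trans (hvx.mono (deleteEdges_le _)).symm)
      · refine ⟨⟨K.connectedComponentMk v, ?_⟩, ?_⟩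
        · intro hc
          exact hvx (SimpleGraph.ConnectedComponent.exact hc)
        · simp [SimpleGraph.ConnectedComponent.map_mk]; rfl
  have h1 : Nat.card {w : K.ConnectedComponent // w ≠ cx} = omega L :=
    Nat.card_eq_of_bijective _ hbij
  have h2 : Nat.card {w : K.ConnectedComponent // w ≠ cx} + 1 = omega K := by
    have := Nat.card_congr (Equiv.optionSubtypeNe cx)
    rw [Finite.card_option] at this
    exact this
  omega

lemma deleteEdges_not_edge {L : SimpleGraph V} {f : Sym2 V} (hf : f ∉ L.edgeSet) :
    L.deleteEdges {f} = L := by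
  rw [SimpleGraph.deleteEdges_eq_self]
  rintro s hs1 hs2 e he
  have h1 := hs1 he
  have h2 := hs2 he
  simp only [Set.mem_singleton_iff] at h2
  subst h2
  exact absurd h1 hf

lemma omega_deleteEdge_le (M : SimpleGraph V) (f : Sym2 V) :
    omega (M.deleteEdges {f}) ≤ omega M + 1 := by
  by_cases hf : f ∈ M.edgeSet
  · revert hf
    refine Sym2.ind (fun x y hf => ?_) f
    have hadj : M.Adj x y := hf
    by_cases hr : (M.deleteEdges {s(x,y)}).Reachable x y
    · rw [omega_deleteEdge_of_reach hr]; omega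
    · rw [omega_deleteEdge_of_not_reach hadj hr]
  · rw [deleteEdges_not_edge hf]; omega

lemma omega_deleteEdges_finset_le (K : SimpleGraph V) (D : Finset (Sym2 V)) :
    omega (K.deleteEdges ↑D) ≤ omega K + D.card := by
  classical
  induction D using Finset.induction_on with
  | empty => simp
  | @insert f D hfD ih =>
    have hins : (↑(insert f D) : Set (Sym2 V)) = ↑D ∪ {f} := by
      simp [Set.union_singleton, Finset.coe_insert]
    rw [hins, ← SimpleGraph.deleteEdges_deleteEdges]
    calc omega ((K.deleteEdges ↑D).deleteEdges {f})
        ≤ omega (K.deleteEdges ↑D) + 1 := omega_deleteEdge_le _ _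
      _ ≤ omega K + D.card + 1 := by omega
      _ = omega K + (insert f D).card := by rw [Finset.card_insert_of_notMem hfD]; omega

lemma submod_single {K L : SimpleGraph V} (h : K ≤ L) (f : Sym2 V)
    (hf : f ∈ L.edgeSet → f ∈ K.edgeSet) :
    omega (L.deleteEdges {f}) + omega K ≤ omega L + omega (K.deleteEdges {f}) := by
  by_cases hfL : f ∈ L.edgeSet
  · have hfK := hf hfL
    revert hfL hfK
    refine Sym2.ind (fun x y hfL hfK => ?_) f
    have hadjL : L.Adj x y := hfL
    have hadjK : K.Adj x y := hfK
    have hle : K.deleteEdges {s(x,y)} ≤ L.deleteEdges {s(x,y)} :=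
      SimpleGraph.deleteEdges_mono h
    by_cases hr : (L.deleteEdges {s(x,y)}).Reachable x y
    · rw [omega_deleteEdge_of_reach hr]
      have := omega_le_of_le (SimpleGraph.deleteEdges_le (G := K) {s(x,y)})
      omega
    · have hnrK : ¬ (K.deleteEdges {s(x,y)}).Reachable x y :=
        fun hc => hr (hc.mono hle)
      rw [omega_deleteEdge_of_not_reach hadjL hr,
        omega_deleteEdge_of_not_reach hadjK hnrK]
      omega
  · have hfK : f ∉ K.edgeSet := fun hc => hfL (SimpleGraph.edgeSet_mono h hc)
    rw [deleteEdges_not_edge hfL, deleteEdges_not_edge hfK]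

lemma submod_finset (D : Finset (Sym2 V)) :
    ∀ (K L : SimpleGraph V), K ≤ L → (∀ f ∈ D, f ∈ L.edgeSet → f ∈ K.edgeSet) →
    omega (L.deleteEdges ↑D) + omega K ≤ omega L + omega (K.deleteEdges ↑D) := by
  classical
  induction D using Finset.induction_on with
  | empty => intro K L h _; simp
  | @insert f D hfD ih =>
    intro K L h hcond
    have hins : (↑(insert f D) : Set (Sym2 V)) = ↑D ∪ {f} := by
      simp [Set.union_singleton, Finset.coe_insert]
    rw [hins, ← SimpleGraph.deleteEdges_deleteEdges,
      ← SimpleGraph.deleteEdges_deleteEdges]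
    have hle' : K.deleteEdges ↑D ≤ L.deleteEdges ↑D := SimpleGraph.deleteEdges_mono h
    have hstep := submod_single hle' f (by
      intro hfL
      rw [SimpleGraph.edgeSet_deleteEdges] at hfL ⊢
      exact ⟨hcond f (Finset.mem_insert_self f D) hfL.1, hfL.2⟩)
    have hih := ih K L h (fun g hg => hcond g (Finset.mem_insert_of_mem hg))
    omega

lemma submod_sets (H : SimpleGraph V) (s t : Set (Sym2 V)) :
    omega (H.deleteEdges s) + omega (H.deleteEdges t) ≤
      omega (H.deleteEdges (s ∪ t)) + omega (H.deleteEdges (s ∩ t)) := by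
  classical
  have hfin : (t \ s).Finite := Set.toFinite _
  set D : Finset (Sym2 V) := hfin.toFinset with hD
  have hDcoe : (↑D : Set (Sym2 V)) = t \ s := hfin.coe_toFinset
  have h1 : (H.deleteEdges (s ∩ t)).deleteEdges ↑D = H.deleteEdges t := by
    rw [SimpleGraph.deleteEdges_deleteEdges, hDcoe]
    congr 1
    rw [Set.inter_comm]
    rw [Set.inter_union_diff]
  have h2 : (H.deleteEdges s).deleteEdges ↑D = H.deleteEdges (s ∪ t) := by
    rw [SimpleGraph.deleteEdges_deleteEdges, hDcoe, Set.union_diff_self]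
  have hle : H.deleteEdges s ≤ H.deleteEdges (s ∩ t) :=
    SimpleGraph.deleteEdges_anti Set.inter_subset_left
  have hcond : ∀ f ∈ D, f ∈ (H.deleteEdges (s ∩ t)).edgeSet →
      f ∈ (H.deleteEdges s).edgeSet := by
    intro f hf hfe
    rw [hD, Set.Finite.mem_toFinset] at hf
    rw [SimpleGraph.edgeSet_deleteEdges] at hfe ⊢
    exact ⟨hfe.1, hf.2⟩
  have := submod_finset D (H.deleteEdges s) (H.deleteEdges (s ∩ t)) hle hcond
  rw [h1, h2] at this
  omega


section Cond

variable {C : Type*}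

/-- The color-deletion condition. -/
def Cond (color : Sym2 V → C) (H : SimpleGraph V) : Prop :=
  ∀ R : Set C, R.Finite → omega (H.deleteEdges {e | color e ∈ R}) ≤ R.ncard + 1

lemma deleteEdges_congr {H : SimpleGraph V} {A B : Set (Sym2 V)}
    (h : ∀ e ∈ H.edgeSet, e ∈ A ↔ e ∈ B) : H.deleteEdges A = H.deleteEdges B := by
  ext a b
  simp only [SimpleGraph.deleteEdges_adj]
  constructor
  · rintro ⟨h1, h2⟩
    exact ⟨h1, fun hc => h2 ((h _ h1).mpr hc)⟩
  · rintro ⟨h1, h2⟩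
    exact ⟨h1, fun hc => h2 ((h _ h1).mp hc)⟩

lemma cond_delete {color : Sym2 V → C} {H : SimpleGraph V} (hC : Cond color H)
    {e₁ e₂ : Sym2 V} (h1 : e₁ ∈ H.edgeSet) (h2 : e₂ ∈ H.edgeSet) (hne : e₁ ≠ e₂)
    (hcol : color e₁ = color e₂) :
    Cond color (H.deleteEdges {e₁}) ∨ Cond color (H.deleteEdges {e₂}) := by
  by_contra hcon
  push_neg at hcon
  obtain ⟨hc1, hc2⟩ := hcon
  rw [Cond] at hc1 hc2
  push_neg at hc1 hc2
  obtain ⟨R₁, hR₁f, hR₁⟩ := hc1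
  obtain ⟨R₂, hR₂f, hR₂⟩ := hc2
  rw [SimpleGraph.deleteEdges_deleteEdges] at hR₁ hR₂
  -- the common color is not in R₁, R₂
  have hcR₁ : color e₁ ∉ R₁ := by
    intro hc
    have heq : H.deleteEdges ({e₁} ∪ {e | color e ∈ R₁}) =
        H.deleteEdges {e | color e ∈ R₁} := by
      refine deleteEdges_congr fun e _ => ?_
      constructor
      · rintro (rfl | he)
        · exact hc
        · exact he
      · exact fun he => Or.inr he
    rw [heq] at hR₁
    exact absurd (hC R₁ hR₁f) (by omega)
  have hcR₂ : color e₁ ∉ R₂ := by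
    intro hc
    have heq : H.deleteEdges ({e₂} ∪ {e | color e ∈ R₂}) =
        H.deleteEdges {e | color e ∈ R₂} := by
      refine deleteEdges_congr fun e _ => ?_
      constructor
      · rintro (rfl | he)
        · exact show color _ ∈ R₂ from hcol ▸ hc
        · exact he
      · exact fun he => Or.inr he
    rw [heq] at hR₂
    exact absurd (hC R₂ hR₂f) (by omega)
  set s : Set (Sym2 V) := {e₁} ∪ {e | color e ∈ R₁} with hs
  set t : Set (Sym2 V) := {e₂} ∪ {e | color e ∈ R₂} with ht
  -- intersection
  have hst : s ∩ t = {e | color e ∈ R₁ ∩ R₂} := by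
    ext e
    simp only [hs, ht, Set.mem_inter_iff, Set.mem_union, Set.mem_singleton_iff,
      Set.mem_setOf_eq]
    constructor
    · rintro ⟨rfl | hA, rfl | hB⟩
      · exact absurd rfl hne
      · exact absurd hB hcR₂
      · rw [← hcol] at hA; exact absurd hA hcR₁
      · exact ⟨hA, hB⟩
    · rintro ⟨hA, hB⟩
      exact ⟨Or.inr hA, Or.inr hB⟩
  -- union is contained in the color set of insert c (R₁ ∪ R₂)
  have hsub : s ∪ t ⊆ {e | color e ∈ insert (color e₁) (R₁ ∪ R₂)} := by
    rintro e (h | h) <;> rcases h with h | h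
    · rw [Set.mem_singleton_iff] at h; subst h; exact Set.mem_insert _ _
    · exact Set.mem_insert_of_mem _ (Or.inl h)
    · rw [Set.mem_singleton_iff] at h; subst h
      show color e ∈ insert (color e₁) (R₁ ∪ R₂)
      rw [← hcol]
      exact Set.mem_insert _ _
    · exact Set.mem_insert_of_mem _ (Or.inr h)
  have hA : R₁.ncard + 2 ≤ omega (H.deleteEdges s) := by omega
  have hB : R₂.ncard + 2 ≤ omega (H.deleteEdges t) := by omega
  have hU : omega (H.deleteEdges (s ∪ t)) ≤ (R₁ ∪ R₂).ncard + 2 := by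
    have hmono : omega (H.deleteEdges (s ∪ t)) ≤
        omega (H.deleteEdges {e | color e ∈ insert (color e₁) (R₁ ∪ R₂)}) :=
      omega_le_of_le (SimpleGraph.deleteEdges_anti hsub)
    have hcc := hC (insert (color e₁) (R₁ ∪ R₂)) ((hR₁f.union hR₂f).insert _)
    have hins : (insert (color e₁) (R₁ ∪ R₂)).ncard ≤ (R₁ ∪ R₂).ncard + 1 :=
      Set.ncard_insert_le _ _
    omega
  have hI : omega (H.deleteEdges (s ∩ t)) ≤ (R₁ ∩ R₂).ncard + 1 := by
    rw [hst]
    exact hC _ (hR₁f.subset Set.inter_subset_left)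
  have hsm := submod_sets H s t
  have hcards : (R₁ ∪ R₂).ncard + (R₁ ∩ R₂).ncard = R₁.ncard + R₂.ncard :=
    Set.ncard_union_add_ncard_inter R₁ R₂ hR₁f hR₂f
  omega

lemma connected_of_omega_le_one {H : SimpleGraph V} [Nonempty V]
    (h : omega H ≤ 1) : H.Connected := by
  rw [SimpleGraph.connected_iff]
  refine ⟨fun a b => ?_, inferInstance⟩
  have hs : Subsingleton H.ConnectedComponent := Finite.card_le_one_iff_subsingleton.mp h
  exact SimpleGraph.ConnectedComponent.exact (Subsingleton.elim _ _)

lemma omega_eq_one_of_connected {H : SimpleGraph V} (h : H.Connected) :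
    omega H = 1 := by
  have hne : Nonempty V := h.nonempty
  rw [omega, Nat.card_eq_one_iff_unique]
  constructor
  · constructor
    exact SimpleGraph.ConnectedComponent.ind₂ fun v w =>
      SimpleGraph.ConnectedComponent.sound (h.preconnected v w)
  · exact ⟨H.connectedComponentMk (Classical.arbitrary V)⟩

lemma exists_tree_le : ∀ (n : ℕ) (H : SimpleGraph V), H.edgeSet.ncard ≤ n →
    H.Connected → ∃ T, T ≤ H ∧ T.IsTree := by
  intro n
  induction n with
  | zero =>
    intro H hcard hconn
    refine ⟨H, le_refl _, hconn, ?_⟩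
    rw [SimpleGraph.isAcyclic_iff_forall_edge_isBridge]
    intro e he
    exfalso
    have hz : H.edgeSet = ∅ :=
      (Set.ncard_eq_zero (Set.toFinite H.edgeSet)).mp (Nat.le_zero.mp hcard)
    rw [hz] at he
    exact he
  | succ n ih =>
    intro H hcard hconn
    by_cases hb : ∀ e ∈ H.edgeSet, H.IsBridge e
    · exact ⟨H, le_refl _, hconn,
        SimpleGraph.isAcyclic_iff_forall_edge_isBridge.mpr hb⟩
    · push_neg at hb
      obtain ⟨e, he, hnb⟩ := hb
      revert he hnb
      refine Sym2.ind (fun x y he hnb => ?_) e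
      have hadj : H.Adj x y := he
      have hr : (H.deleteEdges {s(x,y)}).Reachable x y := by
        by_contra hc
        exact hnb hc
      have hconn' : (H.deleteEdges {s(x,y)}).Connected := by
        rw [SimpleGraph.connected_iff]
        refine ⟨fun a b => ?_, ⟨x⟩⟩
        rcases reach_del_cases (x := x) (y := y) (hconn.preconnected a b) with
          h1 | ⟨h2a, h2b⟩ | ⟨h3a, h3b⟩
        · exact h1
        · exact (h2a.trans hr).trans h2b
        · exact (h3a.trans hr.symm).trans h3b
      have hcard' : (H.deleteEdges {s(x,y)}).edgeSet.ncard ≤ n := by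
        rw [SimpleGraph.edgeSet_deleteEdges]
        have h1 : (H.edgeSet \ {s(x,y)}).ncard = H.edgeSet.ncard - 1 := by
          rw [Set.ncard_diff (by simpa using he) (Set.toFinite _), Set.ncard_singleton]
        have h2 : 0 < H.edgeSet.ncard :=
          (Set.ncard_pos (Set.toFinite _)).mpr ⟨_, he⟩
        omega
      obtain ⟨T, hT1, hT2⟩ := ih _ hcard' hconn'
      exact ⟨T, hT1.trans (SimpleGraph.deleteEdges_le _), hT2⟩


lemma tree_of_injOn {color : Sym2 V → C} [Nonempty V] {H : SimpleGraph V}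
    (hC : Cond color H) (hinj : Set.InjOn color H.edgeSet) :
    ∃ T, T ≤ H ∧ T.IsTree ∧ Set.InjOn color T.edgeSet := by
  have h0 := hC ∅ Set.finite_empty
  have hempty : {e : Sym2 V | color e ∈ (∅ : Set C)} = ∅ := by ext e; simp
  rw [hempty, SimpleGraph.deleteEdges_empty, Set.ncard_empty] at h0
  have hconn : H.Connected := connected_of_omega_le_one h0
  obtain ⟨T, hT1, hT2⟩ := exists_tree_le H.edgeSet.ncard H le_rfl hconn
  exact ⟨T, hT1, hT2, hinj.mono (SimpleGraph.edgeSet_mono hT1)⟩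

lemma main_ind (color : Sym2 V → C) [Nonempty V] :
    ∀ (n : ℕ) (H : SimpleGraph V), H.edgeSet.ncard ≤ n → Cond color H →
      ∃ T, T ≤ H ∧ T.IsTree ∧ Set.InjOn color T.edgeSet := by
  intro n
  induction n with
  | zero =>
    intro H hcard hC
    refine tree_of_injOn hC ?_
    have hz : H.edgeSet = ∅ :=
      (Set.ncard_eq_zero (Set.toFinite _)).mp (Nat.le_zero.mp hcard)
    rw [hz]
    exact Set.injOn_empty _
  | succ n ih =>
    intro H hcard hC
    by_cases hinj : Set.InjOn color H.edgeSet
    · exact tree_of_injOn hC hinj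
    · rw [Set.InjOn] at hinj
      push_neg at hinj
      obtain ⟨e₁, h1, e₂, h2, hcol, hne⟩ := hinj
      have hdec : ∀ e ∈ H.edgeSet, (H.deleteEdges {e}).edgeSet.ncard ≤ n := by
        intro e he
        rw [SimpleGraph.edgeSet_deleteEdges]
        have hd : (H.edgeSet \ {e}).ncard = H.edgeSet.ncard - 1 := by
          rw [Set.ncard_diff (by simpa using he) (Set.toFinite _), Set.ncard_singleton]
        have hp : 0 < H.edgeSet.ncard := (Set.ncard_pos (Set.toFinite _)).mpr ⟨_, he⟩
        omega
      rcases cond_delete hC h1 h2 hne hcol with h | h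
      · obtain ⟨T, hT1, hT2, hT3⟩ := ih (H.deleteEdges {e₁}) (hdec e₁ h1) h
        exact ⟨T, hT1.trans (SimpleGraph.deleteEdges_le _), hT2, hT3⟩
      · obtain ⟨T, hT1, hT2, hT3⟩ := ih (H.deleteEdges {e₂}) (hdec e₂ h2) h
        exact ⟨T, hT1.trans (SimpleGraph.deleteEdges_le _), hT2, hT3⟩

lemma parts_card_eq_omega (H : SimpleGraph V) :
    ∃ P : Finpartition (Finset.univ : Finset V),
      P.parts.card = omega H ∧ (∀ a b : V, b ∈ P.part a ↔ H.Reachable a b) := by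
  classical
  set st : Setoid V := ⟨H.Reachable,
    ⟨fun a => Reachable.refl a, Reachable.symm, Reachable.trans⟩⟩ with hst
  letI : DecidableRel st.r := Classical.decRel _
  set P := Finpartition.ofSetoid st with hP
  have hmem : ∀ a b : V, b ∈ P.part a ↔ H.Reachable a b := by
    intro a b
    exact Finpartition.mem_part_ofSetoid_iff_rel
  refine ⟨P, ?_, hmem⟩
  have hwd : ∀ (v w : V), H.Reachable v w → P.part v = P.part w := by
    intro v w hvw
    exact P.eq_of_mem_parts (P.part_mem.2 (Finset.mem_univ v)) (P.part_mem.2 (Finset.mem_univ w))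
      ((hmem v w).mpr hvw) (P.mem_part (Finset.mem_univ w))
  set g : H.ConnectedComponent → Finset V :=
    SimpleGraph.ConnectedComponent.lift (fun v => P.part v)
      (fun v w p _ => hwd v w p.reachable) with hg
  have hbij : Function.Bijective (fun c : H.ConnectedComponent =>
      (⟨g c, by obtain ⟨v, rfl⟩ := cc_rep c; exact P.part_mem.2 (Finset.mem_univ v)⟩ :
        ↥P.parts)) := by
    constructor
    · intro c c' hcc
      obtain ⟨v, rfl⟩ := cc_rep c
      obtain ⟨v', rfl⟩ := cc_rep c'
      have hgg : P.part v = P.part v' := congrArg Subtype.val hcc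
      have : v' ∈ P.part v := by rw [hgg]; exact P.mem_part (Finset.mem_univ v')
      exact SimpleGraph.ConnectedComponent.sound ((hmem v v').mp this)
    · rintro ⟨p, hp⟩
      obtain ⟨v, hv⟩ := P.nonempty_of_mem_parts hp
      refine ⟨H.connectedComponentMk v, ?_⟩
      apply Subtype.ext
      exact (P.eq_of_mem_parts hp (P.part_mem.2 (Finset.mem_univ v)) hv
        (P.mem_part (Finset.mem_univ v))).symm
  have h1 : omega H = Nat.card ↥P.parts := Nat.card_eq_of_bijective _ hbij
  rw [h1, Nat.card_eq_fintype_card, Fintype.card_coe]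

lemma rhs_imp_cond {color : Sym2 V → C} {G : SimpleGraph V}
    (hRHS : ∀ P : Finpartition (Finset.univ : Finset V),
        ∃ S : Finset (Sym2 V), P.parts.card - 1 ≤ S.card ∧
          ↑S ⊆ G.edgeSet ∧ Set.InjOn color ↑S ∧
          ∀ e ∈ S, ∃ x y : V, e = s(x, y) ∧ ∀ p ∈ P.parts, ¬(x ∈ p ∧ y ∈ p)) :
    Cond color G := by
  intro R hRfin
  set H := G.deleteEdges {e | color e ∈ R} with hH
  obtain ⟨P, hPcard, hPmem⟩ := parts_card_eq_omega H
  obtain ⟨S, hS1, hS2, hS3, hS4⟩ := hRHS P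
  have hcolS : ∀ e ∈ S, color e ∈ R := by
    intro e he
    obtain ⟨x, y, rfl, hcross⟩ := hS4 e he
    by_contra hc
    have hGadj : G.Adj x y := hS2 (Finset.mem_coe.mpr he)
    have hHadj : H.Adj x y := by
      rw [hH]
      exact SimpleGraph.deleteEdges_adj.mpr ⟨hGadj, hc⟩
    have hy : y ∈ P.part x := (hPmem x y).mpr hHadj.reachable
    have hx : x ∈ P.part x := P.mem_part (Finset.mem_univ x)
    exact hcross (P.part x) (P.part_mem.2 (Finset.mem_univ x)) ⟨hx, hy⟩
  have hcount : S.card ≤ R.ncard := by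
    have h1 : (color '' ↑S).ncard = S.card := by
      rw [Set.ncard_image_of_injOn hS3, Set.ncard_coe_finset]
    have h2 : color '' ↑S ⊆ R := by
      rintro _ ⟨e, he, rfl⟩
      exact hcolS e (Finset.mem_coe.mp he)
    have := Set.ncard_le_ncard h2 hRfin
    omega
  omega

lemma forward_dir {color : Sym2 V → C} {F G : SimpleGraph V} (hFG : F ≤ G)
    (hT : F.IsTree) (hinj : Set.InjOn color F.edgeSet)
    (P : Finpartition (Finset.univ : Finset V)) :
    ∃ S : Finset (Sym2 V), P.parts.card - 1 ≤ S.card ∧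
      ↑S ⊆ G.edgeSet ∧ Set.InjOn color ↑S ∧
      ∀ e ∈ S, ∃ x y : V, e = s(x, y) ∧ ∀ p ∈ P.parts, ¬(x ∈ p ∧ y ∈ p) := by
  classical
  have hfin : (F.edgeSet ∩
      {e | ∃ x y : V, e = s(x, y) ∧ ∀ p ∈ P.parts, ¬(x ∈ p ∧ y ∈ p)}).Finite :=
    Set.toFinite _
  set S : Finset (Sym2 V) := hfin.toFinset with hS
  have hmem : ∀ e, e ∈ S ↔ e ∈ F.edgeSet ∧
      ∃ x y : V, e = s(x, y) ∧ ∀ p ∈ P.parts, ¬(x ∈ p ∧ y ∈ p) := by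
    intro e
    rw [hS, Set.Finite.mem_toFinset]
    rfl
  have hsubF : (↑S : Set (Sym2 V)) ⊆ F.edgeSet := by
    intro e he
    exact ((hmem e).mp (Finset.mem_coe.mp he)).1
  refine ⟨S, ?_, fun e he => SimpleGraph.edgeSet_mono hFG (hsubF he),
    hinj.mono hsubF, fun e he => ((hmem e).mp he).2⟩
  -- cardinality bound
  set F' := F.deleteEdges ↑S with hF'
  have hkey : ∀ a b : V, F'.Reachable a b → P.part a = P.part b := by
    intro a b hab
    obtain ⟨w⟩ := hab
    induction w with
    | nil => rfl
    | @cons u v b huv p ih =>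
      have h1 : F.Adj u v := (SimpleGraph.deleteEdges_adj.mp huv).1
      have h2 : s(u,v) ∉ (↑S : Set (Sym2 V)) := (SimpleGraph.deleteEdges_adj.mp huv).2
      have hnc : ¬ ∃ x y : V, s(u,v) = s(x, y) ∧
          ∀ p ∈ P.parts, ¬(x ∈ p ∧ y ∈ p) := fun hc =>
        h2 (Finset.mem_coe.mpr ((hmem _).mpr ⟨h1, hc⟩))
      push_neg at hnc
      obtain ⟨p, hp, hu, hv⟩ := hnc u v rfl
      have heq1 : P.part u = p :=
        P.eq_of_mem_parts (P.part_mem.2 (Finset.mem_univ u)) hp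
          (P.mem_part (Finset.mem_univ u)) hu
      have heq2 : P.part v = p :=
        P.eq_of_mem_parts (P.part_mem.2 (Finset.mem_univ v)) hp
          (P.mem_part (Finset.mem_univ v)) hv
      rw [heq1, ← heq2]
      exact ih
  have hle : P.parts.card ≤ omega F' := by
    have hinj2 : Function.Injective (fun p : ↥P.parts =>
        F'.connectedComponentMk (P.nonempty_of_mem_parts p.2).choose) := by
      rintro ⟨p, hp⟩ ⟨q, hq⟩ hpq
      have hr : F'.Reachable _ _ := SimpleGraph.ConnectedComponent.exact hpq
      have hparts := hkey _ _ hr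
      have hcp := (P.nonempty_of_mem_parts hp).choose_spec
      have hcq := (P.nonempty_of_mem_parts hq).choose_spec
      have e1 : P.part (P.nonempty_of_mem_parts hp).choose = p :=
        P.eq_of_mem_parts (P.part_mem.2 (Finset.mem_univ _)) hp
          (P.mem_part (Finset.mem_univ _)) hcp
      have e2 : P.part (P.nonempty_of_mem_parts hq).choose = q :=
        P.eq_of_mem_parts (P.part_mem.2 (Finset.mem_univ _)) hq
          (P.mem_part (Finset.mem_univ _)) hcq
      exact Subtype.ext ((e1.symm.trans hparts).trans e2)
    have : Nat.card ↥P.parts ≤ Nat.card F'.ConnectedComponent :=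
      Nat.card_le_card_of_injective _ hinj2
    rwa [Nat.card_eq_fintype_card, Fintype.card_coe] at this
  have hone : omega F = 1 := omega_eq_one_of_connected hT.isConnected
  have hdel : omega F' ≤ omega F + S.card := omega_deleteEdges_finset_le F S
  omega

end Cond

end HetAux

theorem stmt12 {V C : Type*} [Fintype V] [DecidableEq V] (G : SimpleGraph V)
    (color : Sym2 V → C) (hG : G.Connected) :
    (∃ F : SimpleGraph V, F ≤ G ∧ F.IsTree ∧ Set.InjOn color F.edgeSet) ↔
      ∀ P : Finpartition (Finset.univ : Finset V),
        ∃ S : Finset (Sym2 V), P.parts.card - 1 ≤ S.card ∧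
          ↑S ⊆ G.edgeSet ∧ Set.InjOn color ↑S ∧
          ∀ e ∈ S, ∃ x y : V, e = s(x, y) ∧
            ∀ p ∈ P.parts, ¬(x ∈ p ∧ y ∈ p) := by
  constructor
  · rintro ⟨F, hFG, hT, hinj⟩ P
    exact HetAux.forward_dir hFG hT hinj P
  · intro hRHS
    have hne : Nonempty V := hG.nonempty
    have hcond := HetAux.rhs_imp_cond (color := color) hRHS
    obtain ⟨T, hT1, hT2, hT3⟩ :=
      HetAux.main_ind color G.edgeSet.ncard G le_rfl hcond
    exact ⟨T, hT1, hT2, hT3⟩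
end
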